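/- Let H be a Hopf algebra, σ a normalized invertible dual 2-cocycle on H, A a right H-comodule algebra with coaction α, and B = H equipped with the twisted multiplication (g#1)(h#1) = g₍₁₎h₍₁₎ # σ⁻¹(g₍₂₎,h₍₂₎) (a left H-comodule algebra via Δ). Then the map λ : a ↦ a₍₀₎ ⊗ (a₍₁₎#1) is an algebra isomorphism from the twisted algebra A#_{σ⁻¹}ℂ (with product a∙a' = a₍₀₎a'₍₀₎σ⁻¹(a₍₁₎,a'₍₁₎)) onto the cotensor product A □_H B = { z ∈ A ⊗ B : (α⊗id)(z) = (id⊗Δ)(z) }, with inverse z ↦ (id ⊗ ε)(z). -/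
import Mathlib


open TensorProduct

noncomputable section

variable {H : Type*} [Ring H] [HopfAlgebra ℂ H]
variable {A : Type*} [Ring A] [Algebra ℂ A]


/-- `a ↦ a₍₁₎ ⊗ (a₍₂₎ ⊗ a₍₃₎)`, the twofold comultiplication. -/
noncomputable def comul₂ : H →ₗ[ℂ] H ⊗[ℂ] (H ⊗[ℂ] H) :=
  (TensorProduct.map LinearMap.id (Coalgebra.comul (R := ℂ))) ∘ₗ (Coalgebra.comul (R := ℂ))

/-- `σ(a₍₁₎,b₍₁₎)·σ(a₍₂₎b₍₂₎,c)` (Sweedler sums). -/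
noncomputable def cocycleLHS (σ : H ⊗[ℂ] H →ₗ[ℂ] ℂ) (a b c : H) : ℂ :=
  LinearMap.mul' ℂ ℂ
    (TensorProduct.map σ
      (σ ∘ₗ ((TensorProduct.mk ℂ H H).flip c) ∘ₗ LinearMap.mul' ℂ H)
      (TensorProduct.tensorTensorTensorComm ℂ H H H H
        ((Coalgebra.comul (R := ℂ) a) ⊗ₜ[ℂ] (Coalgebra.comul (R := ℂ) b))))

/-- `σ(b₍₁₎,c₍₁₎)·σ(a,b₍₂₎c₍₂₎)` (Sweedler sums). -/
noncomputable def cocycleRHS (σ : H ⊗[ℂ] H →ₗ[ℂ] ℂ) (a b c : H) : ℂ :=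
  LinearMap.mul' ℂ ℂ
    (TensorProduct.map σ
      (σ ∘ₗ (TensorProduct.mk ℂ H H a) ∘ₗ LinearMap.mul' ℂ H)
      (TensorProduct.tensorTensorTensorComm ℂ H H H H
        ((Coalgebra.comul (R := ℂ) b) ⊗ₜ[ℂ] (Coalgebra.comul (R := ℂ) c))))

/-- `σ` is a dual 2-cocycle. -/
def IsDualCocycle (σ : H ⊗[ℂ] H →ₗ[ℂ] ℂ) : Prop :=
  ∀ a b c : H, cocycleLHS σ a b c = cocycleRHS σ a b c

/-- `σ` is normalized: `σ(1,h) = σ(h,1) = ε(h)`. -/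
def IsNormalizedDualCocycle (σ : H ⊗[ℂ] H →ₗ[ℂ] ℂ) : Prop :=
  ∀ h : H, σ (1 ⊗ₜ[ℂ] h) = Coalgebra.counit (R := ℂ) h ∧
    σ (h ⊗ₜ[ℂ] 1) = Coalgebra.counit (R := ℂ) h

/-- Convolution `σ(a₍₁₎,b₍₁₎)·τ(a₍₂₎,b₍₂₎)`. -/
noncomputable def conv₂ (σ τ : H ⊗[ℂ] H →ₗ[ℂ] ℂ) (a b : H) : ℂ :=
  LinearMap.mul' ℂ ℂ
    (TensorProduct.map σ τ
      (TensorProduct.tensorTensorTensorComm ℂ H H H H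
        ((Coalgebra.comul (R := ℂ) a) ⊗ₜ[ℂ] (Coalgebra.comul (R := ℂ) b))))

/-- `σ'` is a convolution inverse of `σ`. -/
def IsConvInverse (σ σ' : H ⊗[ℂ] H →ₗ[ℂ] ℂ) : Prop :=
  ∀ a b : H,
    conv₂ σ σ' a b = Coalgebra.counit (R := ℂ) a * Coalgebra.counit (R := ℂ) b ∧
    conv₂ σ' σ a b = Coalgebra.counit (R := ℂ) a * Coalgebra.counit (R := ℂ) b

/-- The twisted multiplication `g ·_σ h = σ(g₍₁₎,h₍₁₎) g₍₂₎h₍₂₎ σ⁻¹(g₍₃₎,h₍₃₎)`,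
as a linear map on `H ⊗ H`. -/
noncomputable def twistMul (σ σ' : H ⊗[ℂ] H →ₗ[ℂ] ℂ) : H ⊗[ℂ] H →ₗ[ℂ] H :=
  (TensorProduct.lid ℂ H).toLinearMap ∘ₗ
  TensorProduct.map σ
    ((TensorProduct.rid ℂ H).toLinearMap ∘ₗ TensorProduct.map (LinearMap.mul' ℂ H) σ') ∘ₗ
  TensorProduct.map LinearMap.id
    (TensorProduct.tensorTensorTensorComm ℂ H H H H).toLinearMap ∘ₗ
  (TensorProduct.tensorTensorTensorComm ℂ H (H ⊗[ℂ] H) H (H ⊗[ℂ] H)).toLinearMap ∘ₗ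
  TensorProduct.map comul₂ comul₂

/-- The twisted multiplication `a ∙ a' = a₍₀₎a'₍₀₎ σ⁻¹(a₍₁₎,a'₍₁₎)` on a right
`H`-comodule algebra `A` with coaction `α`. -/
noncomputable def comodTwistMul (α : A →ₐ[ℂ] A ⊗[ℂ] H) (σ' : H ⊗[ℂ] H →ₗ[ℂ] ℂ) :
    A ⊗[ℂ] A →ₗ[ℂ] A :=
  (TensorProduct.rid ℂ A).toLinearMap ∘ₗ
  TensorProduct.map (LinearMap.mul' ℂ A) σ' ∘ₗ
  (TensorProduct.tensorTensorTensorComm ℂ A H A H).toLinearMap ∘ₗ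
  TensorProduct.map α.toLinearMap α.toLinearMap

/-- The twisted multiplication `(g#1)(h#1) = g₍₁₎h₍₁₎ σ⁻¹(g₍₂₎,h₍₂₎)` on `B = H⨳_{σ⁻¹}ℂ`. -/
noncomputable def bTwistMul (σ' : H ⊗[ℂ] H →ₗ[ℂ] ℂ) : H ⊗[ℂ] H →ₗ[ℂ] H :=
  (TensorProduct.rid ℂ H).toLinearMap ∘ₗ
  TensorProduct.map (LinearMap.mul' ℂ H) σ' ∘ₗ
  (TensorProduct.tensorTensorTensorComm ℂ H H H H).toLinearMap ∘ₗ
  TensorProduct.map (Coalgebra.comul (R := ℂ)) (Coalgebra.comul (R := ℂ))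

/-- The cotensor product `A □_H B` for a right coaction `α` on `A` and the left
`H`-comodule structure `Δ` on `B = H`. -/
noncomputable def cotensor (α : A →ₐ[ℂ] A ⊗[ℂ] H) : Submodule ℂ (A ⊗[ℂ] H) :=
  LinearMap.ker
    ((TensorProduct.assoc ℂ A H H).toLinearMap ∘ₗ
        TensorProduct.map α.toLinearMap LinearMap.id -
      TensorProduct.map LinearMap.id (Coalgebra.comul (R := ℂ)))

/-- The product on `A ⊗ B`: `(a⊗b)(a'⊗b') = aa' ⊗ (b ∙ b')`. -/
noncomputable def prodAB (σ' : H ⊗[ℂ] H →ₗ[ℂ] ℂ) :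
    (A ⊗[ℂ] H) ⊗[ℂ] (A ⊗[ℂ] H) →ₗ[ℂ] A ⊗[ℂ] H :=
  TensorProduct.map (LinearMap.mul' ℂ A) (bTwistMul σ') ∘ₗ
  (TensorProduct.tensorTensorTensorComm ℂ A H A H).toLinearMap


/-- Auxiliary: `(h⊗g)⊗(k⊗g') ↦ hk · σ'(g,g')`. -/
noncomputable def auxPsi (σ' : H ⊗[ℂ] H →ₗ[ℂ] ℂ) :
    (H ⊗[ℂ] H) ⊗[ℂ] (H ⊗[ℂ] H) →ₗ[ℂ] H :=
  (TensorProduct.rid ℂ H).toLinearMap ∘ₗ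
  TensorProduct.map (LinearMap.mul' ℂ H) σ' ∘ₗ
  (TensorProduct.tensorTensorTensorComm ℂ H H H H).toLinearMap

/-- Auxiliary: `(x⊗u)⊗(y⊗v) ↦ xy ⊗ auxPsi(u⊗v)`. -/
noncomputable def auxPhi (σ' : H ⊗[ℂ] H →ₗ[ℂ] ℂ) :
    (A ⊗[ℂ] (H ⊗[ℂ] H)) ⊗[ℂ] (A ⊗[ℂ] (H ⊗[ℂ] H)) →ₗ[ℂ] A ⊗[ℂ] H :=
  TensorProduct.map (LinearMap.mul' ℂ A) (auxPsi σ') ∘ₗ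
  (TensorProduct.tensorTensorTensorComm ℂ A (H ⊗[ℂ] H) A (H ⊗[ℂ] H)).toLinearMap

/-- `a⊗(h⊗k) ↦ ε(k) • (a⊗h)`. -/
noncomputable def auxEps : A ⊗[ℂ] (H ⊗[ℂ] H) →ₗ[ℂ] A ⊗[ℂ] H :=
  TensorProduct.map LinearMap.id
    ((TensorProduct.rid ℂ H).toLinearMap ∘ₗ
      TensorProduct.map LinearMap.id (Coalgebra.counit (R := ℂ)))

lemma aux_claimA (σ' : H ⊗[ℂ] H →ₗ[ℂ] ℂ) :
    prodAB (H := H) (A := A) σ' =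
      auxPhi σ' ∘ₗ
        TensorProduct.map
          (TensorProduct.map LinearMap.id (Coalgebra.comul (R := ℂ)))
          (TensorProduct.map LinearMap.id (Coalgebra.comul (R := ℂ))) := by
  ext x h y k
  simp [prodAB, auxPhi, auxPsi, bTwistMul]

lemma aux_claimB1 (σ' : H ⊗[ℂ] H →ₗ[ℂ] ℂ) (α : A →ₐ[ℂ] A ⊗[ℂ] H) :
    α.toLinearMap ∘ₗ (TensorProduct.rid ℂ A).toLinearMap ∘ₗ
      TensorProduct.map (LinearMap.mul' ℂ A) σ' ∘ₗ
      (TensorProduct.tensorTensorTensorComm ℂ A H A H).toLinearMap =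
    ((TensorProduct.rid ℂ (A ⊗[ℂ] H)).toLinearMap ∘ₗ
      TensorProduct.map (LinearMap.mul' ℂ (A ⊗[ℂ] H)) σ' ∘ₗ
      (TensorProduct.tensorTensorTensorComm ℂ (A ⊗[ℂ] H) H (A ⊗[ℂ] H) H).toLinearMap) ∘ₗ
      TensorProduct.map (TensorProduct.map α.toLinearMap LinearMap.id)
        (TensorProduct.map α.toLinearMap LinearMap.id) := by
  ext x h y k
  simp [map_mul]

lemma aux_claimB2 (σ' : H ⊗[ℂ] H →ₗ[ℂ] ℂ) :
    ((TensorProduct.rid ℂ (A ⊗[ℂ] H)).toLinearMap ∘ₗ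
      TensorProduct.map (LinearMap.mul' ℂ (A ⊗[ℂ] H)) σ' ∘ₗ
      (TensorProduct.tensorTensorTensorComm ℂ (A ⊗[ℂ] H) H (A ⊗[ℂ] H) H).toLinearMap) =
    auxPhi σ' ∘ₗ
      TensorProduct.map (TensorProduct.assoc ℂ A H H).toLinearMap
        (TensorProduct.assoc ℂ A H H).toLinearMap := by
  ext x h g y k g'
  simp [auxPhi, auxPsi, Algebra.TensorProduct.tmul_mul_tmul, TensorProduct.smul_tmul',
    TensorProduct.tmul_smul]

lemma aux_claimC :
    auxEps (A := A) (H := H) ∘ₗ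
      TensorProduct.map LinearMap.id (Coalgebra.comul (R := ℂ)) = LinearMap.id := by
  ext x h
  have : TensorProduct.map (LinearMap.id (R := ℂ) (M := H)) (Coalgebra.counit (R := ℂ))
      (Coalgebra.comul (R := ℂ) h) = h ⊗ₜ[ℂ] 1 := by
    simpa [LinearMap.lTensor] using Coalgebra.lTensor_counit_comul (R := ℂ) h
  simp [auxEps, this]

lemma aux_claimD1 :
    auxEps (A := A) (H := H) ∘ₗ (TensorProduct.assoc ℂ A H H).toLinearMap =
      (TensorProduct.rid ℂ (A ⊗[ℂ] H)).toLinearMap ∘ₗ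
        TensorProduct.map LinearMap.id (Coalgebra.counit (R := ℂ)) := by
  ext x h k
  simp [auxEps, TensorProduct.smul_tmul', TensorProduct.tmul_smul]

lemma aux_claimD2 (α : A →ₐ[ℂ] A ⊗[ℂ] H) :
    (TensorProduct.rid ℂ (A ⊗[ℂ] H)).toLinearMap ∘ₗ
        (TensorProduct.map LinearMap.id (Coalgebra.counit (R := ℂ))) ∘ₗ
        TensorProduct.map α.toLinearMap LinearMap.id =
      α.toLinearMap ∘ₗ (TensorProduct.rid ℂ A).toLinearMap ∘ₗ
        TensorProduct.map (LinearMap.id (R := ℂ) (M := A)) (Coalgebra.counit (R := ℂ) (A := H)) := by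
  ext x h
  simp [TensorProduct.smul_tmul', TensorProduct.tmul_smul]

/-- `λ : a ↦ a₍₀₎ ⊗ (a₍₁₎#1)`, i.e. `α`, is an algebra isomorphism from
`A⨳_{σ⁻¹}ℂ` onto the cotensor product `A □_H B`, with inverse `(id ⊗ ε)`. -/
theorem twisted_iso_cotensor (σ σ' : H ⊗[ℂ] H →ₗ[ℂ] ℂ)
    (hcoc : IsDualCocycle σ) (hnorm : IsNormalizedDualCocycle σ)
    (hinv : IsConvInverse σ σ')
    (α : A →ₐ[ℂ] A ⊗[ℂ] H)
    (hαco : ∀ a : A,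
      (TensorProduct.assoc ℂ A H H)
          ((TensorProduct.map α.toLinearMap LinearMap.id) (α a)) =
        (TensorProduct.map LinearMap.id (Coalgebra.comul (R := ℂ))) (α a))
    (hαcu : ∀ a : A,
      (TensorProduct.rid ℂ A)
          ((TensorProduct.map LinearMap.id (Coalgebra.counit (R := ℂ))) (α a)) = a) :
    -- λ maps into the cotensor product
    (∀ a : A, α a ∈ cotensor (H := H) (A := A) α) ∧
    -- λ is multiplicative for the twisted products
    (∀ a a' : A,
      α (comodTwistMul α σ' (a ⊗ₜ[ℂ] a')) = prodAB σ' ((α a) ⊗ₜ[ℂ] (α a'))) ∧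
    -- λ is unital
    (α 1 = 1) ∧
    -- `(id ⊗ ε)` is a left inverse of λ (this is `hαcu`) and a right inverse on the
    -- cotensor product, so λ is bijective onto `A □_H B`
    (∀ z ∈ cotensor (H := H) (A := A) α,
      α ((TensorProduct.rid ℂ A)
          ((TensorProduct.map LinearMap.id (Coalgebra.counit (R := ℂ))) z)) = z) := by
  set L := (TensorProduct.assoc ℂ A H H).toLinearMap ∘ₗ
    TensorProduct.map α.toLinearMap LinearMap.id with hL
  set R := TensorProduct.map (LinearMap.id (R := ℂ) (M := A)) (Coalgebra.comul (R := ℂ) (A := H)) with hR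
  have hmem : ∀ a : A, α a ∈ cotensor (H := H) (A := A) α := by
    intro a
    simp only [cotensor, LinearMap.mem_ker, LinearMap.sub_apply, sub_eq_zero]
    exact hαco a
  refine ⟨hmem, ?_, map_one α, ?_⟩
  · intro a a'
    have h1 : α (comodTwistMul α σ' (a ⊗ₜ[ℂ] a')) =
        auxPhi σ' ((L (α a)) ⊗ₜ[ℂ] (L (α a'))) := by
      have := congrArg (fun f => f ((α a) ⊗ₜ[ℂ] (α a')))
        ((aux_claimB1 σ' α).trans (by rw [aux_claimB2 σ']))
      simpa [comodTwistMul, hL] using this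
    have h2 : prodAB σ' ((α a) ⊗ₜ[ℂ] (α a')) =
        auxPhi σ' ((R (α a)) ⊗ₜ[ℂ] (R (α a'))) := by
      have := congrArg (fun f => f ((α a) ⊗ₜ[ℂ] (α a'))) (aux_claimA σ')
      simpa [hR] using this
    have hco : ∀ b : A, L (α b) = R (α b) := fun b => hαco b
    rw [h1, hco a, hco a', ← h2]
  · intro z hz
    have hker : L z = R z := by
      simpa [cotensor, LinearMap.mem_ker, LinearMap.sub_apply, sub_eq_zero, hL, hR] using hz
    have h3 : auxEps (L z) =
        α ((TensorProduct.rid ℂ A)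
          ((TensorProduct.map LinearMap.id (Coalgebra.counit (R := ℂ))) z)) := by
      have := congrArg (fun f => f z)
        (((LinearMap.comp_assoc _ _ _).symm.trans
          (congrArg (· ∘ₗ TensorProduct.map α.toLinearMap LinearMap.id)
            (aux_claimD1 (A := A) (H := H)))).trans
          ((LinearMap.comp_assoc _ _ _).trans (aux_claimD2 α)))
      simpa [hL] using this
    have h4 : auxEps (R z) = z := by
      have := congrArg (fun f => f z) (aux_claimC (A := A) (H := H))
      simpa [hR] using this
    rw [← h3, hker, h4]
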